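/- Let nonnegative reals a_t (t = 0,...,τ-1) satisfy, for each t ≤ τ-1, a_t ≤ 2A + 2B + 4η²L²t(∑_{t'=0}^{t-1} a_{t'} + σ²), where A, B, σ² ≥ 0, η, L > 0. If ηLE ≤ 1/2 and τ ≤ E, then ∑_{t=0}^{τ-1} a_t ≤ 4τA + 4τB + σ². -/
import Mathlib

lemma sum_range_id_le_half_sq (n : ℕ) :
    (∑ t ∈ Finset.range n, (t : ℝ)) ≤ (n : ℝ) ^ 2 / 2 := by
  induction n with
  | zero => simp
  | succ n ih =>
    rw [Finset.sum_range_succ]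
    push_cast
    nlinarith

theorem recursive_sum_bound (τ E : ℕ) (hτE : τ ≤ E)
    (a : ℕ → ℝ) (ha : ∀ t, 0 ≤ a t)
    (A B σ2 η L : ℝ) (hA : 0 ≤ A) (hB : 0 ≤ B) (hσ2 : 0 ≤ σ2)
    (hη : 0 < η) (hL : 0 < L) (hηLE : η * L * E ≤ 1 / 2)
    (hrec : ∀ t < τ,
      a t ≤ 2 * A + 2 * B
        + 4 * η ^ 2 * L ^ 2 * t * ((∑ t' ∈ Finset.range t, a t') + σ2)) :
    ∑ t ∈ Finset.range τ, a t ≤ 4 * τ * A + 4 * τ * B + σ2 := by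
  set S := ∑ t ∈ Finset.range τ, a t with hS
  have hSnn : 0 ≤ S := Finset.sum_nonneg fun t _ => ha t
  have hstep : ∀ t < τ, a t ≤ 2 * A + 2 * B + 4 * η ^ 2 * L ^ 2 * t * (S + σ2) := by
    intro t ht
    refine (hrec t ht).trans ?_
    have hsub : (∑ t' ∈ Finset.range t, a t') ≤ S :=
      Finset.sum_le_sum_of_subset_of_nonneg (Finset.range_subset_range.2 ht.le)
        (fun i _ _ => ha i)
    have hc : (0:ℝ) ≤ 4 * η ^ 2 * L ^ 2 * t := by positivity
    nlinarith [mul_le_mul_of_nonneg_left (add_le_add_right hsub σ2) hc]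
  have h1 : S ≤ ∑ t ∈ Finset.range τ, (2 * A + 2 * B + 4 * η ^ 2 * L ^ 2 * (t:ℝ) * (S + σ2)) :=
    Finset.sum_le_sum fun t ht => hstep t (Finset.mem_range.1 ht)
  have h2 : ∑ t ∈ Finset.range τ, (2 * A + 2 * B + 4 * η ^ 2 * L ^ 2 * (t:ℝ) * (S + σ2))
      = (τ:ℝ) * (2 * A + 2 * B) + 4 * η ^ 2 * L ^ 2 * (S + σ2) * (∑ t ∈ Finset.range τ, (t:ℝ)) := by
    have hterm : ∀ t : ℕ, 2 * A + 2 * B + 4 * η ^ 2 * L ^ 2 * (t:ℝ) * (S + σ2)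
        = (2 * A + 2 * B) + (4 * η ^ 2 * L ^ 2 * (S + σ2)) * (t:ℝ) := by intro t; ring
    simp_rw [hterm, Finset.sum_add_distrib, Finset.sum_const, Finset.card_range,
      nsmul_eq_mul, ← Finset.mul_sum]
    ring
  have hcnn : (0:ℝ) ≤ 4 * η ^ 2 * L ^ 2 * (S + σ2) := by positivity
  have h3 : S ≤ (τ:ℝ) * (2 * A + 2 * B) + 4 * η ^ 2 * L ^ 2 * (S + σ2) * ((τ:ℝ) ^ 2 / 2) := by
    calc S ≤ _ := h1
    _ = _ := h2
    _ ≤ _ := by gcongr; exact sum_range_id_le_half_sq τ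
  have hτ' : (τ:ℝ) ≤ (E:ℝ) := by exact_mod_cast hτE
  have hτnn : (0:ℝ) ≤ (τ:ℝ) := Nat.cast_nonneg τ
  have hηLτ : η * L * τ ≤ 1 / 2 := by
    refine le_trans ?_ hηLE
    have := mul_pos hη hL
    nlinarith
  have hx : (0:ℝ) ≤ η * L * τ := by positivity
  have hkey : 2 * η ^ 2 * L ^ 2 * (τ:ℝ) ^ 2 ≤ 1 / 2 := by
    nlinarith [mul_le_mul hηLτ hηLτ hx (by norm_num : (0:ℝ) ≤ 1/2)]
  nlinarith [mul_nonneg hτnn (add_nonneg hA hB), add_nonneg hSnn hσ2,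
    mul_le_mul_of_nonneg_left hkey (add_nonneg hSnn hσ2)]
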